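/- For every nonnegative integer n, S_n^{(r,k)}(x|a_1,…,a_r) = Σ_{m=0}^n ( Σ_{l=m}^n S_2(l,m) C(n,l) S_{n−l}^{(r,k)}(−m|a_1,…,a_r) ) (x)^{(m)}, as an identity of polynomials in x, where (x)^{(m)} = x(x+1)⋯(x+m−1) is the rising factorial with (x)^{(0)} = 1. -/

import Mathlib

open PowerSeries Finset

/-- The formal power series `e^{c·t}` over a commutative `ℚ`-algebra `R`. -/
noncomputable def expS {R : Type*} [CommRing R] [Algebra ℚ R] (c : R) : PowerSeries R :=
  PowerSeries.rescale c (PowerSeries.exp R)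

/-- The formal power series `Li_k(1 - e^{-t})` over `ℂ`, where
`Li_k(z) = ∑_{m ≥ 1} z^m / m^k` is the `k`-th polylogarithm.  Since `1 - e^{-t}`
has order `1`, the coefficient of `t^n` only involves the terms with `1 ≤ m ≤ n`. -/
noncomputable def Lik (k : ℤ) : PowerSeries ℂ :=
  PowerSeries.mk fun n => ∑ m ∈ Finset.Icc 1 n,
    ((m : ℂ) ^ k)⁻¹ * PowerSeries.coeff n ((1 - expS (-1 : ℂ)) ^ m)

/-- The exponential generating function `∑_n p n · t^n / n!` of a sequence of
complex polynomials. -/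
noncomputable def egf (p : ℕ → Polynomial ℂ) : PowerSeries (Polynomial ℂ) :=
  PowerSeries.mk fun n => ((n.factorial : ℂ))⁻¹ • p n

section Aux
variable {R : Type*} [CommRing R]

lemma coeff_expS [Algebra ℚ R] (c : R) (n : ℕ) :
    PowerSeries.coeff n (expS c) = c ^ n * algebraMap ℚ R (1 / n.factorial) := by
  simp [expS, PowerSeries.coeff_rescale, PowerSeries.coeff_exp]

lemma expS_mul [Algebra ℚ R] (c d : R) : expS c * expS d = expS (c + d) :=
  PowerSeries.exp_mul_exp_eq_exp_add c d

lemma expS_zero [Algebra ℚ R] : expS (0 : R) = 1 := by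
  ext n
  rcases n with _ | n <;> simp [coeff_expS]

lemma expS_pow [Algebra ℚ R] (c : R) (N : ℕ) : (expS c) ^ N = expS ((N : R) * c) := by
  induction N with
  | zero => simp [expS_zero]
  | succ N ih =>
      rw [pow_succ, ih, expS_mul]
      push_cast
      ring_nf

lemma map_expS {S : Type*} [CommRing S] [Algebra ℚ R] [Algebra ℚ S] (f : R →+* S)
    (hf : ∀ q : ℚ, f (algebraMap ℚ R q) = algebraMap ℚ S q) (c : R) :
    PowerSeries.map f (expS c) = expS (f c) := by
  ext n
  simp [PowerSeries.coeff_map, coeff_expS, hf]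

lemma coeff_pow_mul_eq_zero {u F : PowerSeries R} (hu : PowerSeries.constantCoeff u = 0)
    {m n : ℕ} (h : n < m) : PowerSeries.coeff n (u ^ m * F) = 0 := by
  have hX : (PowerSeries.X : PowerSeries R) ^ m ∣ u ^ m * F :=
    Dvd.dvd.mul_right (pow_dvd_pow_of_dvd (PowerSeries.X_dvd_iff.mpr hu) m) F
  exact (PowerSeries.X_pow_dvd_iff.mp hX) n h

lemma coeff_pow_eq_zero {u : PowerSeries R} (hu : PowerSeries.constantCoeff u = 0)
    {m n : ℕ} (h : n < m) : PowerSeries.coeff n (u ^ m) = 0 := by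
  simpa using coeff_pow_mul_eq_zero (F := 1) hu h

lemma coeff_mul_sum_rep (B F : PowerSeries R) (g : ℕ → R) (h : ℕ → PowerSeries R)
    (hF : ∀ j, PowerSeries.coeff j F = ∑ m ∈ range (j + 1), g m * PowerSeries.coeff j (h m))
    (hh : ∀ m j, j < m → PowerSeries.coeff j (h m) = 0) (n : ℕ) :
    PowerSeries.coeff n (B * F)
      = ∑ m ∈ range (n + 1), g m * PowerSeries.coeff n (B * h m) := by
  have key : ∀ j ≤ n, PowerSeries.coeff j F
      = ∑ m ∈ range (n + 1), g m * PowerSeries.coeff j (h m) := by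
    intro j hj
    rw [hF j]
    refine Finset.sum_subset (Finset.range_subset_range.mpr (by omega)) ?_
    intro m hm hnm
    rw [hh m j (by simp only [Finset.mem_range] at hm hnm ⊢; omega), mul_zero]
  rw [PowerSeries.coeff_mul]
  have h1 : ∀ p ∈ antidiagonal n,
      PowerSeries.coeff p.1 B * PowerSeries.coeff p.2 F
        = ∑ m ∈ range (n + 1),
            g m * (PowerSeries.coeff p.1 B * PowerSeries.coeff p.2 (h m)) := by
    intro p hp
    rw [key p.2 (Finset.HasAntidiagonal.antidiagonal.snd_le hp), Finset.mul_sum]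
    exact Finset.sum_congr rfl fun m _ => by ring
  rw [Finset.sum_congr rfl h1, Finset.sum_comm]
  exact Finset.sum_congr rfl fun m _ => by rw [PowerSeries.coeff_mul, Finset.mul_sum]

/-- The truncated expansion of `(1-u)^{-N}`. -/
noncomputable def Vs (u : PowerSeries R) (N : ℕ) : PowerSeries R :=
  PowerSeries.mk fun n => ∑ m ∈ range (n + 1),
    ((N + m - 1).choose m : R) * PowerSeries.coeff n (u ^ m)

lemma Vs_zero (u : PowerSeries R) : Vs u 0 = 1 := by
  ext n
  rw [Vs, PowerSeries.coeff_mk]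
  rw [Finset.sum_eq_single 0]
  · simp
  · intro m hm hm0
    rw [Nat.choose_eq_zero_of_lt (by omega), Nat.cast_zero, zero_mul]
  · intro h; simp at h

lemma Vs_succ_mul (u : PowerSeries R) (hu : PowerSeries.constantCoeff u = 0) (N : ℕ) :
    Vs u (N + 1) * (1 - u) = Vs u N := by
  ext n
  have hF : ∀ j, PowerSeries.coeff j (Vs u (N + 1))
      = ∑ m ∈ range (j + 1), ((N + m).choose m : R) * PowerSeries.coeff j (u ^ m) := by
    intro j
    rw [Vs, PowerSeries.coeff_mk]
    refine Finset.sum_congr rfl fun m _ => ?_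
    have h' : N + 1 + m - 1 = N + m := by omega
    rw [h']
  have hmul : PowerSeries.coeff n (u * Vs u (N + 1))
      = ∑ m ∈ range (n + 1), ((N + m).choose m : R) * PowerSeries.coeff n (u ^ (m + 1)) := by
    rw [coeff_mul_sum_rep u (Vs u (N + 1)) _ (fun m => u ^ m) hF
      (fun m j hj => coeff_pow_eq_zero hu hj) n]
    exact Finset.sum_congr rfl fun m _ => by rw [← pow_succ']
  rw [mul_sub, mul_one, map_sub, hF n, mul_comm (Vs u (N + 1)) u, hmul, Vs,
    PowerSeries.coeff_mk]
  rw [Finset.sum_range_succ'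
      (fun m => ((N + m).choose m : R) * PowerSeries.coeff n (u ^ m)) n,
    Finset.sum_range_succ
      (fun m => ((N + m).choose m : R) * PowerSeries.coeff n (u ^ (m + 1))) n,
    Finset.sum_range_succ'
      (fun m => ((N + m - 1).choose m : R) * PowerSeries.coeff n (u ^ m)) n]
  rw [coeff_pow_eq_zero hu (lt_add_one n), mul_zero]
  simp only [add_zero]
  rw [add_sub_right_comm, ← Finset.sum_sub_distrib]
  congr 1
  · refine Finset.sum_congr rfl fun m _ => ?_
    have h1 : N + (m + 1) - 1 = N + m := by omega
    have h3 : (N + (m + 1)).choose (m + 1) = (N + m).choose m + (N + m).choose (m + 1) := by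
      rw [show N + (m + 1) = (N + m) + 1 from by omega, Nat.choose_succ_succ]
    rw [h1, h3]
    push_cast
    ring
  · simp

lemma pow_mul_Vs (u : PowerSeries R) (hu : PowerSeries.constantCoeff u = 0) (N : ℕ) :
    (1 - u) ^ N * Vs u N = 1 := by
  induction N with
  | zero => simp [Vs_zero]
  | succ N ih =>
      calc (1 - u) ^ (N + 1) * Vs u (N + 1)
          = (1 - u) ^ N * (Vs u (N + 1) * (1 - u)) := by ring
        _ = (1 - u) ^ N * Vs u N := by rw [Vs_succ_mul u hu N]
        _ = 1 := ih

lemma constantCoeff_expS [Algebra ℚ R] (c : R) : PowerSeries.constantCoeff (expS c) = 1 := by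
  rw [← PowerSeries.coeff_zero_eq_constantCoeff_apply, coeff_expS]
  simp

lemma constantCoeff_one_sub_expS [Algebra ℚ R] (c : R) :
    PowerSeries.constantCoeff (1 - expS c) = 0 := by
  simp [constantCoeff_expS]

lemma expS_nat_eq_Vs [Algebra ℚ R] (N : ℕ) :
    expS ((N : R)) = Vs (1 - expS (-1 : R)) N := by
  have hu := constantCoeff_one_sub_expS (-1 : R)
  have key := pow_mul_Vs (1 - expS (-1 : R)) hu N
  have h1 : 1 - (1 - expS (-1 : R)) = expS (-1 : R) := by ring
  calc expS ((N : R))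
      = expS ((N : R)) * ((1 - (1 - expS (-1 : R))) ^ N * Vs (1 - expS (-1 : R)) N) := by
        rw [key, mul_one]
    _ = (expS ((N : R)) * expS ((N : R) * (-1))) * Vs (1 - expS (-1 : R)) N := by
        rw [h1, expS_pow]; ring
    _ = Vs (1 - expS (-1 : R)) N := by
        rw [expS_mul, show (N : R) + (N : R) * (-1) = 0 from by ring, expS_zero, one_mul]

end Aux

lemma hC_alg : ∀ q : ℚ, (Polynomial.C : ℂ →+* Polynomial ℂ) (algebraMap ℚ ℂ q)
    = algebraMap ℚ (Polynomial ℂ) q := fun q => (Polynomial.algebraMap_apply q).symm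

lemma hEv_alg (x : ℂ) : ∀ q : ℚ, (Polynomial.evalRingHom x) (algebraMap ℚ (Polynomial ℂ) q)
    = algebraMap ℚ ℂ q := by
  intro q
  simp [Polynomial.algebraMap_apply]

lemma prod_cast_asc (N m : ℕ) :
    ∏ i ∈ range m, ((N : ℂ) + (i : ℂ)) = (N.ascFactorial m : ℂ) := by
  induction m with
  | zero => simp
  | succ m ih =>
      rw [Finset.prod_range_succ, ih, Nat.ascFactorial_succ]
      push_cast
      ring

lemma newton_poly (n : ℕ) :
    PowerSeries.coeff n (expS (Polynomial.X : Polynomial ℂ))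
      = ∑ m ∈ range (n + 1),
          (Polynomial.C (((m.factorial : ℂ))⁻¹ *
              PowerSeries.coeff n ((1 - expS (-1 : ℂ)) ^ m)))
            * ∏ i ∈ range m, (Polynomial.X + Polynomial.C (i : ℂ)) := by
  apply Polynomial.eq_of_infinite_eval_eq
  refine Set.Infinite.mono ?_ (Set.infinite_range_of_injective (Nat.cast_injective (R := ℂ)))
  rintro x ⟨N, rfl⟩
  show Polynomial.eval _ _ = Polynomial.eval _ _
  have hmap : PowerSeries.map (Polynomial.evalRingHom ((N : ℂ)))
      (expS (Polynomial.X : Polynomial ℂ)) = expS ((N : ℂ)) := by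
    rw [map_expS _ (hEv_alg _)]
    simp
  have hL : Polynomial.eval ((N : ℂ))
      (PowerSeries.coeff n (expS (Polynomial.X : Polynomial ℂ)))
      = PowerSeries.coeff n (expS ((N : ℂ))) := by
    rw [← hmap, PowerSeries.coeff_map]
    rfl
  rw [hL, expS_nat_eq_Vs, Vs, PowerSeries.coeff_mk]
  rw [Polynomial.eval_finset_sum]
  refine Finset.sum_congr rfl fun m _ => ?_
  rw [Polynomial.eval_mul, Polynomial.eval_C, Polynomial.eval_prod]
  simp only [Polynomial.eval_add, Polynomial.eval_X, Polynomial.eval_C]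
  rw [prod_cast_asc, Nat.ascFactorial_eq_factorial_mul_choose']
  have hfac : ((m.factorial : ℂ)) ≠ 0 := by exact_mod_cast m.factorial_ne_zero
  push_cast
  field_simp

/-- The egf of the values of `S` at `-m`. -/
noncomputable def Emk (S : ℕ → Polynomial ℂ) (m : ℕ) : PowerSeries ℂ :=
  PowerSeries.mk fun j => ((j.factorial : ℂ))⁻¹ * Polynomial.eval (-(m : ℂ)) (S j)

lemma scalar_step (S2 : ℕ → ℕ → ℂ) (hS2z : ∀ m l : ℕ, l < m → S2 l m = 0)
    (e : ℕ → ℂ) (j m : ℕ) :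
    ((j.factorial : ℂ))⁻¹ * ∑ l ∈ Finset.Icc m j, S2 l m * (j.choose l : ℂ) * e (j - l)
      = ∑ l ∈ range (j + 1), (S2 l m / (l.factorial : ℂ))
          * ((((j - l).factorial : ℂ))⁻¹ * e (j - l)) := by
  rw [Finset.mul_sum]
  rw [← Finset.sum_subset (show Finset.Icc m j ⊆ range (j + 1) by
        intro l hl; simp only [Finset.mem_Icc] at hl; simp only [Finset.mem_range]; omega)]
  · refine Finset.sum_congr rfl fun l hl => ?_
    have hlj : l ≤ j := (Finset.mem_Icc.mp hl).2
    have hch : ((j.choose l : ℕ) : ℂ) * (l.factorial : ℂ) * ((j - l).factorial : ℂ)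
        = (j.factorial : ℂ) := by
      exact_mod_cast congrArg (Nat.cast : ℕ → ℂ)
        (by rw [← Nat.choose_mul_factorial_mul_factorial hlj])
    have h1 : ((l.factorial : ℂ)) ≠ 0 := by exact_mod_cast l.factorial_ne_zero
    have h2 : (((j - l).factorial : ℂ)) ≠ 0 := by exact_mod_cast (j - l).factorial_ne_zero
    have h3 : ((j.factorial : ℂ)) ≠ 0 := by exact_mod_cast j.factorial_ne_zero
    have hch0 : ((j.choose l : ℕ) : ℂ) ≠ 0 :=
      Nat.cast_ne_zero.mpr (Nat.choose_pos hlj).ne'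
    rw [← hch]
    field_simp
  · intro l hl hnl
    have : l < m := by
      simp only [Finset.mem_range] at hl
      simp only [Finset.mem_Icc] at hnl
      omega
    rw [hS2z m l this]
    simp

theorem stmt10 (r : ℕ) (hr : 0 < r) (k : ℤ) (a : Fin r → ℂ) (ha : ∀ j, a j ≠ 0)
    (S : ℕ → Polynomial ℂ) (S2 : ℕ → ℕ → ℂ)
    -- `S n` is the mixed-type polynomial `S_n^{(r,k)}(x|a_1,…,a_r)`:
    (hS : (PowerSeries.X : PowerSeries (Polynomial ℂ)) ^ r
        * PowerSeries.map Polynomial.C (Lik k) * expS Polynomial.X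
        = (∏ j, (expS (Polynomial.C (a j)) - 1)) * (1 - expS (-1 : Polynomial ℂ)) * egf S)
    -- `S2 l m` is the Stirling number of the second kind, defined by
    -- `(e^t - 1)^m = m! ∑_{l ≥ m} S2(l,m) t^l / l!`:
    (hS2 : ∀ m, (PowerSeries.exp ℂ - 1) ^ m
        = (m.factorial : ℂ) • PowerSeries.mk (fun l => S2 l m / (l.factorial : ℂ)))
    (n : ℕ) :
    S n = ∑ m ∈ Finset.range (n + 1),
      Polynomial.C (∑ l ∈ Finset.Icc m n,
          S2 l m * (n.choose l : ℂ) * (S (n - l)).eval (-(m : ℂ)))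
        * ∏ i ∈ Finset.range m, (Polynomial.X + Polynomial.C (i : ℂ)) := by
  classical
  have hfacC : ∀ j : ℕ, ((j.factorial : ℂ)) ≠ 0 := fun j => by
    exact_mod_cast j.factorial_ne_zero
  -- Stirling numbers vanish below the diagonal
  have hS2z : ∀ m l : ℕ, l < m → S2 l m = 0 := by
    intro m l hlm
    have h0 : PowerSeries.coeff l ((PowerSeries.exp ℂ - 1) ^ m) = 0 :=
      coeff_pow_eq_zero (by simp [PowerSeries.constantCoeff_exp]) hlm
    rw [hS2 m, map_smul, PowerSeries.coeff_mk, smul_eq_mul] at h0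
    rcases mul_eq_zero.mp h0 with h | h
    · exact absurd h (hfacC m)
    · rcases div_eq_zero_iff.mp h with h | h
      · exact h
      · exact absurd h (hfacC l)
  -- the sequence appearing on the right-hand side
  set T : ℕ → Polynomial ℂ := fun n' => ∑ m ∈ Finset.range (n' + 1),
      Polynomial.C (∑ l ∈ Finset.Icc m n',
          S2 l m * (n'.choose l : ℂ) * (S (n' - l)).eval (-(m : ℂ)))
        * ∏ i ∈ Finset.range m, (Polynomial.X + Polynomial.C (i : ℂ)) with hT
  show S n = T n
  -- step A : evaluation of hS at -m
  have mapCeval : ∀ (x : ℂ) (φ : PowerSeries ℂ),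
      PowerSeries.map (Polynomial.evalRingHom x) (PowerSeries.map Polynomial.C φ) = φ := by
    intro x φ; ext j; simp [PowerSeries.coeff_map]
  have hegfmap : ∀ m : ℕ, PowerSeries.map (Polynomial.evalRingHom (-(m : ℂ))) (egf S)
      = Emk S m := by
    intro m
    ext j
    simp [PowerSeries.coeff_map, egf, Emk, PowerSeries.coeff_mk, Polynomial.smul_eq_C_mul]
  have hA : ∀ m : ℕ,
      (PowerSeries.X : PowerSeries ℂ) ^ r * Lik k * expS (-(m : ℂ))
        = (∏ j, (expS (a j) - 1)) * (1 - expS (-1 : ℂ)) * Emk S m := by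
    intro m
    have h := congrArg (PowerSeries.map (Polynomial.evalRingHom (-(m : ℂ)))) hS
    have hprod : PowerSeries.map (Polynomial.evalRingHom (-(m : ℂ)))
        (∏ j, (expS (Polynomial.C (a j)) - 1)) = ∏ j, (expS (a j) - 1) := by
      rw [map_prod]
      refine Finset.prod_congr rfl fun j _ => ?_
      rw [map_sub, map_one, map_expS _ (hEv_alg _)]
      simp
    have honesub : PowerSeries.map (Polynomial.evalRingHom (-(m : ℂ)))
        (1 - expS (-1 : Polynomial ℂ)) = 1 - expS (-1 : ℂ) := by
      rw [map_sub, map_one, map_expS _ (hEv_alg _)]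
      simp
    rw [map_mul, map_mul, map_pow, PowerSeries.map_X, mapCeval,
      map_expS _ (hEv_alg _), map_mul, map_mul, hprod, honesub, hegfmap] at h
    simpa using h
  -- step B
  have hq : (PowerSeries.exp ℂ - 1) * expS (-1 : ℂ) = 1 - expS (-1 : ℂ) := by
    have hexp : PowerSeries.exp ℂ = expS (1 : ℂ) := by
      rw [expS, PowerSeries.rescale_one]; rfl
    rw [sub_mul, one_mul, hexp, expS_mul]
    norm_num [expS_zero]
  have hpowm : ∀ m : ℕ, expS (-(m : ℂ)) = expS (-1 : ℂ) ^ m := by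
    intro m
    rw [expS_pow]
    norm_num
  have hB : ∀ m : ℕ,
      (∏ j, (expS (a j) - 1)) * (1 - expS (-1 : ℂ))
          * ((PowerSeries.exp ℂ - 1) ^ m * Emk S m)
        = ((PowerSeries.X : PowerSeries ℂ) ^ r * Lik k) * (1 - expS (-1 : ℂ)) ^ m := by
    intro m
    calc (∏ j, (expS (a j) - 1)) * (1 - expS (-1 : ℂ))
          * ((PowerSeries.exp ℂ - 1) ^ m * Emk S m)
        = (PowerSeries.exp ℂ - 1) ^ m
            * ((∏ j, (expS (a j) - 1)) * (1 - expS (-1 : ℂ)) * Emk S m) := by ring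
      _ = (PowerSeries.exp ℂ - 1) ^ m
            * ((PowerSeries.X : PowerSeries ℂ) ^ r * Lik k * expS (-(m : ℂ))) := by
          rw [← hA m]
      _ = ((PowerSeries.X : PowerSeries ℂ) ^ r * Lik k)
            * (((PowerSeries.exp ℂ - 1) * expS (-1 : ℂ)) ^ m) := by
          rw [hpowm m, mul_pow]; ring
      _ = _ := by rw [hq]
  -- step C : the base series over Polynomial ℂ are images under C
  have hGR : (∏ j, (expS (Polynomial.C (a j)) - 1)) * (1 - expS (-1 : Polynomial ℂ))
      = PowerSeries.map Polynomial.C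
          ((∏ j, (expS (a j) - 1)) * (1 - expS (-1 : ℂ))) := by
    rw [map_mul, map_prod, map_sub, map_one, map_expS _ hC_alg]
    congr 1
    · refine Finset.prod_congr rfl fun j _ => ?_
      rw [map_sub, map_one, map_expS _ hC_alg]
    · norm_num
  have hAR : (PowerSeries.X : PowerSeries (Polynomial ℂ)) ^ r
        * PowerSeries.map Polynomial.C (Lik k)
      = PowerSeries.map Polynomial.C ((PowerSeries.X : PowerSeries ℂ) ^ r * Lik k) := by
    rw [map_mul, map_pow, PowerSeries.map_X]
  -- coefficients of egf T
  have hFT : ∀ j, PowerSeries.coeff j (egf T)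
      = ∑ m ∈ range (j + 1),
          (Polynomial.C ((m.factorial : ℂ))⁻¹
              * ∏ i ∈ range m, (Polynomial.X + Polynomial.C (i : ℂ)))
            * PowerSeries.coeff j
                (PowerSeries.map Polynomial.C ((PowerSeries.exp ℂ - 1) ^ m * Emk S m)) := by
    intro j
    rw [egf, PowerSeries.coeff_mk, hT]
    rw [Finset.smul_sum]
    refine Finset.sum_congr rfl fun m hm => ?_
    have hcoeff : PowerSeries.coeff j ((PowerSeries.exp ℂ - 1) ^ m * Emk S m)
        = (m.factorial : ℂ) * ∑ l ∈ range (j + 1),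
            (S2 l m / (l.factorial : ℂ))
              * ((((j - l).factorial : ℂ))⁻¹ * Polynomial.eval (-(m : ℂ)) (S (j - l))) := by
      rw [hS2 m, smul_mul_assoc, map_smul, smul_eq_mul, PowerSeries.coeff_mul,
        Finset.Nat.sum_antidiagonal_eq_sum_range_succ_mk]
      simp [Emk, PowerSeries.coeff_mk]
    rw [PowerSeries.coeff_map, hcoeff]
    have hs := scalar_step S2 hS2z (fun i => Polynomial.eval (-(m : ℂ)) (S i)) j m
    rw [Polynomial.smul_eq_C_mul, ← mul_assoc, ← Polynomial.C_mul, hs]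
    have hcancel : ((m.factorial : ℂ))⁻¹ * ((m.factorial : ℂ) * (∑ l ∈ range (j + 1),
          S2 l m / (l.factorial : ℂ)
            * ((((j - l).factorial : ℂ))⁻¹ * Polynomial.eval (-(m : ℂ)) (S (j - l)))))
        = ∑ l ∈ range (j + 1), S2 l m / (l.factorial : ℂ)
            * ((((j - l).factorial : ℂ))⁻¹ * Polynomial.eval (-(m : ℂ)) (S (j - l))) := by
      rw [← mul_assoc, inv_mul_cancel₀ (hfacC m), one_mul]
    conv_lhs => rw [← hcancel]
    rw [Polynomial.C_mul]
    ring
  have hhT : ∀ m j, j < m → PowerSeries.coeff j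
      (PowerSeries.map Polynomial.C ((PowerSeries.exp ℂ - 1) ^ m * Emk S m)) = 0 := by
    intro m j hj
    rw [PowerSeries.coeff_map,
      coeff_pow_mul_eq_zero (by simp [PowerSeries.constantCoeff_exp]) hj, map_zero]
  -- coefficients of expS X
  have hFexp : ∀ j, PowerSeries.coeff j (expS (Polynomial.X : Polynomial ℂ))
      = ∑ m ∈ range (j + 1),
          (Polynomial.C ((m.factorial : ℂ))⁻¹
              * ∏ i ∈ range m, (Polynomial.X + Polynomial.C (i : ℂ)))
            * PowerSeries.coeff j
                (PowerSeries.map Polynomial.C ((1 - expS (-1 : ℂ)) ^ m)) := by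
    intro j
    rw [newton_poly j]
    refine Finset.sum_congr rfl fun m _ => ?_
    rw [PowerSeries.coeff_map, Polynomial.C_mul]
    ring
  have hhexp : ∀ m j, j < m → PowerSeries.coeff j
      (PowerSeries.map Polynomial.C ((1 - expS (-1 : ℂ)) ^ m)) = 0 := by
    intro m j hj
    rw [PowerSeries.coeff_map,
      coeff_pow_eq_zero (constantCoeff_one_sub_expS (-1 : ℂ)) hj, map_zero]
  -- main power series identity
  have hmain : (∏ j, (expS (Polynomial.C (a j)) - 1)) * (1 - expS (-1 : Polynomial ℂ))
        * egf T
      = (∏ j, (expS (Polynomial.C (a j)) - 1)) * (1 - expS (-1 : Polynomial ℂ)) * egf S := by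
    rw [← hS]
    apply PowerSeries.ext
    intro n'
    rw [coeff_mul_sum_rep _ (egf T) _ _ hFT hhT n',
      coeff_mul_sum_rep _ (expS (Polynomial.X : Polynomial ℂ)) _ _ hFexp hhexp n']
    refine Finset.sum_congr rfl fun m _ => ?_
    rw [hGR, hAR, ← map_mul (PowerSeries.map Polynomial.C), ← map_mul (PowerSeries.map Polynomial.C),
      hB m, map_mul (PowerSeries.map Polynomial.C), map_mul (PowerSeries.map Polynomial.C)]
  -- the base series is nonzero
  have hGCne : (∏ j, (expS (a j) - 1)) * (1 - expS (-1 : ℂ)) ≠ 0 := by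
    apply mul_ne_zero
    · rw [Finset.prod_ne_zero_iff]
      intro j _ h0
      have h1 := congrArg (PowerSeries.coeff 1) h0
      rw [map_sub, coeff_expS] at h1
      simp at h1
      exact ha j h1
    · intro h0
      have h1 := congrArg (PowerSeries.coeff 1) h0
      rw [map_sub, coeff_expS] at h1
      simp at h1
  have hGRne : (∏ j, (expS (Polynomial.C (a j)) - 1)) * (1 - expS (-1 : Polynomial ℂ)) ≠ 0 := by
    rw [hGR]
    intro h0
    apply hGCne
    apply PowerSeries.ext
    intro n'
    have h1 := congrArg (PowerSeries.coeff n') h0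
    rw [PowerSeries.coeff_map, map_zero] at h1
    rw [map_zero]
    exact Polynomial.C_eq_zero.mp h1
  have hegfTS : egf T = egf S := mul_left_cancel₀ hGRne hmain
  have h2 := congrArg (PowerSeries.coeff n) hegfTS
  rw [egf, egf, PowerSeries.coeff_mk, PowerSeries.coeff_mk] at h2
  exact (smul_right_injective (Polynomial ℂ) (inv_ne_zero (hfacC n)) h2).symm
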